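/- Let m ≥ 1, n ≥ 0 be integers and x, y, ξ, η ∈ ℂ with x ≠ 0, Re(ξ/x) < 1, Im(η − ξy/x) > 0, and i(y + kx) ∉ [0,∞) for every k ∈ ℤ. Then the function u ↦ J_{m,n}(u x, u y, ξ, η) (for real u near 1) is differentiable at u = 1, with derivative (x∂_x + y∂_y) J_{m,n}(x,y,ξ,η) = (n+1) · J_{m,n}(x,y,ξ,η) − 2π · J_{m−1,n+1}(x,y,ξ,η). -/

import Mathlib

open MeasureTheory Real Filter

/-- The polylogarithm `Li_p(w) = ∑_{j ≥ 1} w^j / j^p`, for integer index `p`. -/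
noncomputable def Li (p : ℤ) (w : ℂ) : ℂ := ∑' j : ℕ, w ^ (j + 1) / ((j : ℂ) + 1) ^ p

/-- The integrand in the definition of `J_{m,n}(x,y,ξ,η)`. -/
noncomputable def Jfun (m n : ℕ) (x y ξ η : ℂ) (s : ℝ) : ℂ :=
  (s : ℂ) ^ n *
      Li m (Complex.exp (-(2 * (π : ℂ)) * (1 - ξ / x) * s +
        2 * (π : ℂ) * Complex.I * (η - ξ * y / x))) /
    Complex.tanh ((π : ℂ) * ((s : ℂ) - Complex.I * y) / x)

/-- The function `J_{m,n}(x,y,ξ,η)`. -/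
noncomputable def J (m n : ℕ) (x y ξ η : ℂ) : ℂ :=
  (-1 : ℂ) ^ (n + m + 1) * ∫ s in Set.Ioi (0 : ℝ), Jfun m n x y ξ η s

/-- The nonnegative real axis `[0,∞)` viewed as a subset of `ℂ`. -/
def nonnegRealAxis : Set ℂ := {z : ℂ | ∃ r : ℝ, 0 ≤ r ∧ z = r}

namespace Stmt8Aux

lemma norm_term_le (p : ℕ) (w : ℂ) (j : ℕ) :
    ‖w ^ (j + 1) / ((j : ℂ) + 1) ^ (p : ℤ)‖ ≤ ‖w‖ ^ (j + 1) := by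
  rw [norm_div, norm_pow, norm_zpow]
  have h1 : (1 : ℝ) ≤ ‖(j : ℂ) + 1‖ := by
    have h : ((j : ℂ) + 1) = ((j + 1 : ℕ) : ℂ) := by push_cast; ring
    rw [h, Complex.norm_natCast]
    exact_mod_cast Nat.one_le_iff_ne_zero.2 (Nat.succ_ne_zero j)
  have h2 : (1 : ℝ) ≤ ‖(j : ℂ) + 1‖ ^ (p : ℤ) := by
    rw [zpow_natCast]; exact one_le_pow₀ h1
  exact div_le_self (pow_nonneg (norm_nonneg _) _) h2

lemma summable_norm_li (p : ℕ) {w : ℂ} (hw : ‖w‖ < 1) :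
    Summable fun j : ℕ => ‖w ^ (j + 1) / ((j : ℂ) + 1) ^ (p : ℤ)‖ := by
  apply Summable.of_nonneg_of_le (fun j => norm_nonneg _) (norm_term_le p w)
  simpa [pow_succ] using (summable_geometric_of_lt_one (norm_nonneg w) hw).mul_right ‖w‖

lemma norm_Li_le (p : ℕ) {w : ℂ} (hw : ‖w‖ < 1) : ‖Li p w‖ ≤ ‖w‖ / (1 - ‖w‖) := by
  have h0 : Summable fun j : ℕ => ‖w‖ ^ (j + 1) := by
    simpa [pow_succ] using (summable_geometric_of_lt_one (norm_nonneg w) hw).mul_right ‖w‖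
  calc ‖Li p w‖ ≤ ∑' j : ℕ, ‖w ^ (j + 1) / ((j : ℂ) + 1) ^ (p : ℤ)‖ :=
        norm_tsum_le_tsum_norm (summable_norm_li p hw)
    _ ≤ ∑' j : ℕ, ‖w‖ ^ (j + 1) := Summable.tsum_le_tsum (norm_term_le p w) (summable_norm_li p hw) h0
    _ = ‖w‖ * ∑' j : ℕ, ‖w‖ ^ j := by
        rw [← tsum_mul_left]; exact tsum_congr fun j => (pow_succ' _ _)
    _ = ‖w‖ * (1 - ‖w‖)⁻¹ := by rw [tsum_geometric_of_lt_one (norm_nonneg w) hw]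
    _ = ‖w‖ / (1 - ‖w‖) := (div_eq_mul_inv _ _).symm


lemma Li_eq_tsum_exp (p : ℕ) (w : ℂ) :
    Li p (Complex.exp w) = ∑' j : ℕ, Complex.exp (((j : ℂ) + 1) * w) / ((j : ℂ) + 1) ^ (p : ℤ) := by
  unfold Li
  refine tsum_congr fun j => ?_
  congr 1
  rw [show ((j : ℂ) + 1) * w = ((j + 1 : ℕ) : ℂ) * w by push_cast; ring, Complex.exp_nat_mul]

lemma re_aux (j : ℕ) (w : ℂ) : (((j : ℂ) + 1) * w).re = ((j : ℝ) + 1) * w.re := by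
  simp [Complex.add_re, Complex.mul_re]

lemma norm_cexp_aux (j : ℕ) (w : ℂ) :
    ‖Complex.exp (((j : ℂ) + 1) * w)‖ = Real.exp w.re ^ (j + 1) := by
  rw [Complex.norm_exp, re_aux, ← Real.exp_nat_mul]
  push_cast; ring_nf

lemma natC_ne_zero (j : ℕ) : ((j : ℂ) + 1) ≠ 0 := by
  have : ((j : ℂ) + 1) = ((j + 1 : ℕ) : ℂ) := by push_cast; ring
  rw [this]; exact_mod_cast Nat.succ_ne_zero j

lemma norm_zpow_natC (j : ℕ) (p : ℕ) : ‖((j : ℂ) + 1) ^ (p : ℤ)‖ = ((j : ℝ) + 1) ^ p := by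
  rw [norm_zpow, zpow_natCast]
  congr 1
  have : ((j : ℂ) + 1) = ((j + 1 : ℕ) : ℂ) := by push_cast; ring
  rw [this, Complex.norm_natCast]; push_cast; ring

lemma hasDerivAt_Li_exp (p : ℕ) (hp : 1 ≤ p) (a : ℝ) (b : ℂ) (u₀ : ℝ)
    (h : a * u₀ + b.re < 0) :
    HasDerivAt (fun u : ℝ => Li p (Complex.exp ((a : ℂ) * u + b)))
      ((a : ℂ) * Li ((p - 1 : ℕ) : ℤ) (Complex.exp ((a : ℂ) * u₀ + b))) u₀ := by
  set ε : ℝ := -(a * u₀ + b.re) / 2 with hε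
  have hε0 : 0 < ε := by simp only [hε]; linarith
  set δ : ℝ := ε / (|a| + 1) with hδ
  have hδ0 : 0 < δ := div_pos hε0 (by positivity)
  have key : ∀ u ∈ Metric.ball u₀ δ, a * u + b.re ≤ -ε := by
    intro u hu
    rw [Metric.mem_ball, Real.dist_eq] at hu
    have h2 : a * (u - u₀) ≤ |a| * |u - u₀| := by
      calc a * (u - u₀) ≤ |a * (u - u₀)| := le_abs_self _
        _ = |a| * |u - u₀| := abs_mul _ _
    have h3 : |a| * |u - u₀| ≤ |a| * δ := mul_le_mul_of_nonneg_left hu.le (abs_nonneg a)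
    have h4 : |a| * δ ≤ ε := by
      rw [hδ, mul_div_assoc', div_le_iff₀ (by positivity)]
      nlinarith [abs_nonneg a, hε0]
    nlinarith
  -- the series
  set G : ℕ → ℝ → ℂ := fun j u => Complex.exp (((j : ℂ) + 1) * ((a : ℂ) * u + b)) / ((j : ℂ) + 1) ^ (p : ℤ) with hG
  set G' : ℕ → ℝ → ℂ := fun j u =>
    Complex.exp (((j : ℂ) + 1) * ((a : ℂ) * u + b)) * (((j : ℂ) + 1) * a) / ((j : ℂ) + 1) ^ (p : ℤ) with hG'
  have hGd : ∀ (j : ℕ) (u : ℝ), HasDerivAt (G j) (G' j u) u := by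
    intro j u
    have h1 : HasDerivAt (fun z : ℂ => ((j : ℂ) + 1) * ((a : ℂ) * z + b)) (((j : ℂ) + 1) * a) (u : ℂ) := by
      simpa using (((hasDerivAt_id ((u : ℝ) : ℂ)).const_mul (a : ℂ)).add_const b).const_mul ((j : ℂ) + 1)
    exact (h1.comp_ofReal.cexp).div_const _
  -- bound
  set r : ℝ := Real.exp (-ε) with hr
  have hr1 : r < 1 := Real.exp_lt_one_iff.2 (by linarith)
  have hr0 : 0 < r := Real.exp_pos _
  have husum : Summable fun j : ℕ => |a| * r ^ (j + 1) := by
    apply Summable.mul_left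
    simpa [pow_succ] using (summable_geometric_of_lt_one hr0.le hr1).mul_right r
  have hG'le : ∀ (j : ℕ), ∀ u ∈ Metric.ball u₀ δ, ‖G' j u‖ ≤ |a| * r ^ (j + 1) := by
    intro j u hu
    have hj1 : (1 : ℝ) ≤ (j : ℝ) + 1 := by
      have := Nat.cast_nonneg (α := ℝ) j; linarith
    have hnorm : ‖G' j u‖ =
        Real.exp (((a : ℂ) * u + b).re) ^ (j + 1) * (((j : ℝ) + 1) * |a|) / ((j : ℝ) + 1) ^ p := by
      rw [hG', norm_div, norm_mul, norm_cexp_aux, norm_zpow_natC, norm_mul]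
      congr 2
      have hc : ((j : ℂ) + 1) = ((j + 1 : ℕ) : ℂ) := by push_cast; ring
      rw [hc, Complex.norm_natCast, Complex.norm_real, Real.norm_eq_abs]
      push_cast; ring
    rw [hnorm]
    have hre : ((a : ℂ) * u + b).re = a * u + b.re := by
      simp [Complex.add_re, Complex.mul_re]
    have hexple : Real.exp (((a : ℂ) * u + b).re) ≤ r := by
      rw [hre, hr]; exact Real.exp_le_exp.2 (key u hu)
    have hjp : ((j : ℝ) + 1) ≤ ((j : ℝ) + 1) ^ p := le_self_pow₀ hj1 (by omega)
    have h5 : Real.exp (((a : ℂ) * u + b).re) ^ (j + 1) ≤ r ^ (j + 1) :=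
      pow_le_pow_left₀ (Real.exp_pos _).le hexple _
    have h6 : ((j : ℝ) + 1) / ((j : ℝ) + 1) ^ p ≤ 1 := (div_le_one (by positivity)).2 hjp
    calc Real.exp (((a : ℂ) * u + b).re) ^ (j + 1) * (((j : ℝ) + 1) * |a|) / ((j : ℝ) + 1) ^ p
        ≤ r ^ (j + 1) * (((j : ℝ) + 1) * |a|) / ((j : ℝ) + 1) ^ p := by gcongr
      _ = r ^ (j + 1) * |a| * (((j : ℝ) + 1) / ((j : ℝ) + 1) ^ p) := by ring
      _ ≤ r ^ (j + 1) * |a| * 1 := by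
          apply mul_le_mul_of_nonneg_left h6 (by positivity)
      _ = |a| * r ^ (j + 1) := by ring
  have hS0 : Summable fun j : ℕ => G j u₀ := by
    apply Summable.of_norm
    apply Summable.of_nonneg_of_le (fun j => norm_nonneg _) ?_
      (by simpa [pow_succ] using (summable_geometric_of_lt_one hr0.le hr1).mul_right r)
    intro j
    have hj1 : (1 : ℝ) ≤ (j : ℝ) + 1 := by
      have := Nat.cast_nonneg (α := ℝ) j; linarith
    have h2 : (1 : ℝ) ≤ ((j : ℝ) + 1) ^ p := one_le_pow₀ hj1
    rw [hG, norm_div, norm_cexp_aux, norm_zpow_natC]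
    have hexple : Real.exp (((a : ℂ) * u₀ + b).re) ≤ r := by
      have hre : ((a : ℂ) * u₀ + b).re = a * u₀ + b.re := by
        simp [Complex.add_re, Complex.mul_re]
      rw [hre, hr]
      exact Real.exp_le_exp.2 (key u₀ (Metric.mem_ball_self hδ0))
    calc Real.exp (((a : ℂ) * u₀ + b).re) ^ (j + 1) / ((j : ℝ) + 1) ^ p
        ≤ r ^ (j + 1) / 1 := by
          apply div_le_div₀ (by positivity) (pow_le_pow_left₀ (Real.exp_pos _).le hexple _)
            one_pos h2
      _ = r ^ (j + 1) := div_one _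
  have hmain := hasDerivAt_tsum_of_isPreconnected husum Metric.isOpen_ball
    (convex_ball u₀ δ).isPreconnected (fun j u _ => hGd j u) hG'le
    (Metric.mem_ball_self hδ0) hS0 (Metric.mem_ball_self hδ0)
  have hfun : (fun u : ℝ => Li p (Complex.exp ((a : ℂ) * u + b))) = fun u => ∑' j, G j u := by
    funext u; exact Li_eq_tsum_exp p _
  rw [hfun]
  refine hmain.congr_deriv ?_
  symm
  rw [Li_eq_tsum_exp, ← tsum_mul_left]
  refine tsum_congr fun j => ?_
  have hpz : ((p - 1 : ℕ) : ℤ) = (p : ℤ) - 1 := by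
    rw [Nat.cast_sub hp]; simp
  have hz : ((j : ℂ) + 1) ^ (p : ℤ) = ((j : ℂ) + 1) ^ ((p : ℤ) - 1) * ((j : ℂ) + 1) := by
    rw [← zpow_add_one₀ (natC_ne_zero j)]; ring_nf
  have hpow : ∀ E z : ℂ, z ≠ 0 →
      (a : ℂ) * (E / z ^ ((p : ℤ) - 1)) = E * (z * a) / z ^ (p : ℤ) := by
    intro E z hz0
    rw [show (p : ℤ) = ((p : ℤ) - 1) + 1 by ring, zpow_add_one₀ hz0]
    have : z ^ ((p : ℤ) - 1) ≠ 0 := zpow_ne_zero _ hz0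
    field_simp
    ring
  rw [hpz]
  exact hpow _ _ (natC_ne_zero j)


lemma coth_bound (x y : ℂ) (hx : x ≠ 0)
    (hray : ∀ k : ℤ, Complex.I * (y + (k : ℂ) * x) ∉ nonnegRealAxis) :
    ∃ C : ℝ, 0 ≤ C ∧ ∀ t : ℝ, 0 ≤ t →
      ‖Complex.cosh ((π : ℂ) * ((t : ℂ) - Complex.I * y) / x) /
        Complex.sinh ((π : ℂ) * ((t : ℂ) - Complex.I * y) / x)‖ ≤ C := by
  have hπ : (π : ℂ) ≠ 0 := Complex.ofReal_ne_zero.2 Real.pi_ne_zero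
  set zf : ℝ → ℂ := fun t => (π : ℂ) * ((t : ℂ) - Complex.I * y) / x with hzf
  have hexp1 : ∀ t : ℝ, 0 ≤ t → Complex.exp (2 * zf t) ≠ 1 := by
    intro t ht h1
    obtain ⟨k, hk⟩ := Complex.exp_eq_one_iff.mp h1
    refine hray k ⟨t, ht, ?_⟩
    rw [show 2 * zf t = 2 * ((π : ℂ) * ((t : ℂ) - Complex.I * y)) / x by rw [hzf]; ring] at hk
    rw [div_eq_iff hx] at hk
    have h2 : (2 * (π : ℂ)) ≠ 0 := mul_ne_zero two_ne_zero hπ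
    have h3 : (t : ℂ) - Complex.I * y = (k : ℂ) * Complex.I * x := by
      apply mul_left_cancel₀ h2
      linear_combination hk
    linear_combination (-1 : ℂ) * h3
  have hsinh : ∀ t : ℝ, 0 ≤ t → Complex.sinh (zf t) ≠ 0 := by
    intro t ht h
    apply hexp1 t ht
    simp only [Complex.sinh] at h
    have h2 : Complex.exp (zf t) - Complex.exp (-(zf t)) = 0 := by
      rcases div_eq_zero_iff.1 h with h' | h'
      · exact h'
      · exact absurd h' two_ne_zero
    have h1 : Complex.exp (zf t) = Complex.exp (-(zf t)) := sub_eq_zero.mp h2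
    calc Complex.exp (2 * zf t) = Complex.exp (zf t) * Complex.exp (zf t) := by
          rw [two_mul, Complex.exp_add]
      _ = Complex.exp (zf t) * Complex.exp (-(zf t)) := by nth_rewrite 2 [h1]; rfl
      _ = 1 := by rw [← Complex.exp_add, add_neg_cancel, Complex.exp_zero]
  have hcoth : ∀ t : ℝ, 0 ≤ t → Complex.cosh (zf t) / Complex.sinh (zf t) =
      (Complex.exp (2 * zf t) + 1) / (Complex.exp (2 * zf t) - 1) := by
    intro t ht
    have hE : Complex.exp (zf t) ≠ 0 := Complex.exp_ne_zero _
    have hne : Complex.exp (2 * zf t) - 1 ≠ 0 := sub_ne_zero.2 (hexp1 t ht)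
    have hs := hsinh t ht
    simp only [Complex.sinh] at hs
    rw [Complex.exp_neg] at hs
    have hs' : Complex.exp (zf t) - (Complex.exp (zf t))⁻¹ ≠ 0 := by
      intro h0; exact hs (by rw [h0, zero_div])
    rw [two_mul, Complex.exp_add] at hne ⊢
    simp only [Complex.cosh, Complex.sinh]
    rw [Complex.exp_neg]
    field_simp
  set a' : ℂ := 2 * (π : ℂ) / x with ha'
  set b' : ℂ := -(2 * (π : ℂ) * Complex.I * y / x) with hb'
  have hzf2 : ∀ t : ℝ, 2 * zf t = a' * t + b' := by
    intro t; rw [hzf, ha', hb']; field_simp; ring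
  have hnormq : ∀ t : ℝ, ‖Complex.exp (a' * t + b')‖ = Real.exp (a'.re * t + b'.re) := by
    intro t
    rw [Complex.norm_exp]
    congr 1
    simp [Complex.add_re, Complex.mul_re, Complex.ofReal_re, Complex.ofReal_im]
  have hδT : ∃ δ : ℝ, 0 < δ ∧ ∃ T : ℝ, 0 ≤ T ∧
      ∀ t : ℝ, T ≤ t → δ ≤ ‖Complex.exp (2 * zf t) - 1‖ := by
    rcases lt_trichotomy a'.re 0 with hA | hA | hA
    · refine ⟨1/2, by norm_num, max 0 ((Real.log (1/2) - b'.re) / a'.re), le_max_left _ _, ?_⟩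
      intro t htT
      have ht2 : (Real.log (1/2) - b'.re) / a'.re ≤ t := le_trans (le_max_right _ _) htT
      have h3 := mul_le_mul_of_nonpos_left ht2 hA.le
      have h4 : a'.re * ((Real.log (1/2) - b'.re) / a'.re) = Real.log (1/2) - b'.re := by
        rw [mul_div_assoc']; exact mul_div_cancel_left₀ _ hA.ne
      have h1 : a'.re * t + b'.re ≤ Real.log (1/2) := by linarith
      have h2 : ‖Complex.exp (2 * zf t)‖ ≤ 1/2 := by
        rw [hzf2, hnormq]
        calc Real.exp (a'.re * t + b'.re) ≤ Real.exp (Real.log (1/2)) := Real.exp_le_exp.2 h1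
          _ = 1/2 := Real.exp_log (by norm_num)
      calc (1:ℝ)/2 ≤ ‖(1:ℂ)‖ - ‖Complex.exp (2 * zf t)‖ := by rw [norm_one]; linarith
        _ ≤ ‖(1:ℂ) - Complex.exp (2 * zf t)‖ := norm_sub_norm_le _ _
        _ = ‖Complex.exp (2 * zf t) - 1‖ := norm_sub_rev _ _
    · by_cases hB : b'.re = 0
      · exfalso
        have ha'0 : a' ≠ 0 := div_ne_zero (mul_ne_zero two_ne_zero hπ) hx
        have haim : a'.im ≠ 0 := by
          intro h0; exact ha'0 (Complex.ext hA h0)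
        obtain ⟨k, hk⟩ : ∃ k : ℤ, 0 ≤ (2 * π * (k : ℝ) - b'.im) / a'.im := by
          rcases lt_or_gt_of_ne haim with hneg | hpos
          · refine ⟨⌊b'.im / (2 * π)⌋, div_nonneg_iff.2 (Or.inr ⟨?_, hneg.le⟩)⟩
            have h1 : (↑⌊b'.im / (2 * π)⌋ : ℝ) * (2 * π) ≤ (b'.im / (2 * π)) * (2 * π) :=
              mul_le_mul_of_nonneg_right (Int.floor_le _) (by positivity)
            have h2 : (b'.im / (2 * π)) * (2 * π) = b'.im := by
              field_simp
            nlinarith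
          · refine ⟨⌈b'.im / (2 * π)⌉, div_nonneg ?_ hpos.le⟩
            have h1 : (b'.im / (2 * π)) * (2 * π) ≤ (↑⌈b'.im / (2 * π)⌉ : ℝ) * (2 * π) :=
              mul_le_mul_of_nonneg_right (Int.le_ceil _) (by positivity)
            have h2 : (b'.im / (2 * π)) * (2 * π) = b'.im := by
              field_simp
            nlinarith
        set t : ℝ := (2 * π * (k : ℝ) - b'.im) / a'.im with htdef
        have him : a'.im * t + b'.im = 2 * π * (k : ℝ) := by
          rw [htdef]; field_simp; ring
        refine hexp1 t hk ?_
        rw [hzf2, Complex.exp_eq_one_iff]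
        refine ⟨k, ?_⟩
        apply Complex.ext
        · have h5 : (a' * ↑t + b').re = a'.re * t + b'.re := by
            simp [Complex.add_re, Complex.mul_re, Complex.ofReal_re, Complex.ofReal_im]
          rw [h5, hA, hB]
          simp [Complex.mul_re, Complex.mul_im, Complex.I_re, Complex.I_im]
        · have h5 : (a' * ↑t + b').im = a'.im * t + b'.im := by
            simp [Complex.add_im, Complex.mul_im, Complex.ofReal_re, Complex.ofReal_im]
          rw [h5, him]
          simp [Complex.mul_re, Complex.mul_im, Complex.I_re, Complex.I_im]
          ring
      · refine ⟨|Real.exp b'.re - 1|,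
          abs_pos.2 (sub_ne_zero.2 fun h => hB ((Real.exp_eq_one_iff _).1 h)), 0, le_refl 0, ?_⟩
        intro t ht
        have h2 : ‖Complex.exp (2 * zf t)‖ = Real.exp b'.re := by
          rw [hzf2, hnormq, hA, zero_mul, zero_add]
        calc |Real.exp b'.re - 1| = |‖Complex.exp (2 * zf t)‖ - ‖(1:ℂ)‖| := by
              rw [h2, norm_one]
          _ ≤ ‖Complex.exp (2 * zf t) - 1‖ := abs_norm_sub_norm_le _ _
    · refine ⟨1, one_pos, max 0 ((Real.log 2 - b'.re) / a'.re), le_max_left _ _, ?_⟩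
      intro t htT
      have ht2 : (Real.log 2 - b'.re) / a'.re ≤ t := le_trans (le_max_right _ _) htT
      have h3 := mul_le_mul_of_nonneg_left ht2 hA.le
      have h4 : a'.re * ((Real.log 2 - b'.re) / a'.re) = Real.log 2 - b'.re := by
        rw [mul_div_assoc']; exact mul_div_cancel_left₀ _ hA.ne'
      have h1 : Real.log 2 ≤ a'.re * t + b'.re := by linarith
      have h2 : (2:ℝ) ≤ ‖Complex.exp (2 * zf t)‖ := by
        rw [hzf2, hnormq]
        calc (2:ℝ) = Real.exp (Real.log 2) := (Real.exp_log two_pos).symm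
          _ ≤ Real.exp (a'.re * t + b'.re) := Real.exp_le_exp.2 h1
      calc (1:ℝ) ≤ ‖Complex.exp (2 * zf t)‖ - ‖(1:ℂ)‖ := by rw [norm_one]; linarith
        _ ≤ ‖Complex.exp (2 * zf t) - 1‖ := norm_sub_norm_le _ _
  obtain ⟨δ, hδ0, T, hT0, hTδ⟩ := hδT
  have hzc : Continuous zf := by
    rw [hzf]; fun_prop
  have hcont : ContinuousOn (fun t : ℝ => Complex.cosh (zf t) / Complex.sinh (zf t))
      (Set.Icc 0 T) := by
    exact ((Complex.continuous_cosh.comp hzc).continuousOn).div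
      ((Complex.continuous_sinh.comp hzc).continuousOn) (fun t htI => hsinh t htI.1)
  obtain ⟨C₁, hC₁⟩ := (isCompact_Icc).exists_bound_of_continuousOn hcont
  refine ⟨max C₁ (1 + 2/δ), le_max_of_le_right (by positivity), ?_⟩
  intro t ht
  rcases le_total t T with h | h
  · exact le_max_of_le_left (hC₁ t ⟨ht, h⟩)
  · have hq := hTδ t h
    rw [hcoth t ht]
    have hqpos : (0:ℝ) < ‖Complex.exp (2 * zf t) - 1‖ := lt_of_lt_of_le hδ0 hq
    have hstep : ‖Complex.exp (2 * zf t) + 1‖ ≤ ‖Complex.exp (2 * zf t) - 1‖ + 2 := by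
      calc ‖Complex.exp (2 * zf t) + 1‖ = ‖(Complex.exp (2 * zf t) - 1) + 2‖ := by ring_nf
        _ ≤ ‖Complex.exp (2 * zf t) - 1‖ + ‖(2:ℂ)‖ := norm_add_le _ _
        _ = ‖Complex.exp (2 * zf t) - 1‖ + 2 := by norm_num
    calc ‖(Complex.exp (2 * zf t) + 1) / (Complex.exp (2 * zf t) - 1)‖
        = ‖Complex.exp (2 * zf t) + 1‖ / ‖Complex.exp (2 * zf t) - 1‖ := norm_div _ _
      _ ≤ (‖Complex.exp (2 * zf t) - 1‖ + 2) / ‖Complex.exp (2 * zf t) - 1‖ := by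
          exact (div_le_div_iff_of_pos_right hqpos).2 hstep
      _ = 1 + 2 / ‖Complex.exp (2 * zf t) - 1‖ := by
          rw [add_div, div_self (ne_of_gt hqpos)]
      _ ≤ 1 + 2 / δ := by gcongr
      _ ≤ max C₁ (1 + 2/δ) := le_max_right _ _


end Stmt8Aux

open Stmt8Aux

set_option maxHeartbeats 1000000 in
theorem stmt8 (m n : ℕ) (hm : 1 ≤ m) (x y ξ η : ℂ) (hx : x ≠ 0)
    (hξ : (ξ / x).re < 1) (hη : 0 < (η - ξ * y / x).im)
    (hray : ∀ k : ℤ, Complex.I * (y + (k : ℂ) * x) ∉ nonnegRealAxis) :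
    HasDerivAt (fun u : ℝ => J m n ((u : ℂ) * x) ((u : ℂ) * y) ξ η)
      (((n : ℂ) + 1) * J m n x y ξ η - 2 * (π : ℂ) * J (m - 1) (n + 1) x y ξ η) 1 := by
  have hπ0 : (0:ℝ) < π := Real.pi_pos
  set K : ℂ := 2 * (π : ℂ) * Complex.I * (η - ξ * y / x) with hKdef
  set cth : ℝ → ℂ := fun t =>
    Complex.cosh ((π : ℂ) * ((t : ℂ) - Complex.I * y) / x) /
      Complex.sinh ((π : ℂ) * ((t : ℂ) - Complex.I * y) / x) with hcth
  obtain ⟨C, hC0, hCb⟩ := coth_bound x y hx hray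
  have hCb' : ∀ t : ℝ, 0 ≤ t → ‖cth t‖ ≤ C := fun t ht => hCb t ht
  -- basic facts on K
  have hKre : K.re < 0 := by
    have h1 : K = ((2 * π : ℝ) : ℂ) * (Complex.I * (η - ξ * y / x)) := by
      rw [hKdef]; push_cast; ring
    have h2 : K.re = (2 * π) * (-(η - ξ * y / x).im) := by
      rw [h1, Complex.re_ofReal_mul]
      congr 1
      simp [Complex.mul_re, Complex.I_re, Complex.I_im]
    rw [h2]; nlinarith
  set rK : ℝ := Real.exp K.re with hrKdef
  have hrK0 : 0 < rK := Real.exp_pos _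
  have hrK1 : rK < 1 := Real.exp_lt_one_iff.2 hKre
  -- norms of exponentials
  have hre : ∀ (A : ℂ) (t : ℝ), (A * (t : ℂ) + K).re = A.re * t + K.re := by
    intro A t; simp [Complex.add_re, Complex.mul_re]
  have hwnorm : ∀ (A : ℂ) (t : ℝ), ‖Complex.exp (A * (t : ℂ) + K)‖ =
      Real.exp (A.re * t + K.re) := by
    intro A t; rw [Complex.norm_exp, hre]
  have hA_re : ∀ u : ℝ, (-(2 * (π : ℂ)) * ((u : ℂ) - ξ / x)).re = -(2 * π) * (u - (ξ / x).re) := by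
    intro u
    have h1 : -(2 * (π : ℂ)) * ((u : ℂ) - ξ / x) = ((-(2*π) : ℝ) : ℂ) * ((u : ℂ) - ξ / x) := by
      push_cast; ring
    rw [h1, Complex.re_ofReal_mul]
    simp [Complex.sub_re, Complex.ofReal_re]
  -- epsilon / delta
  set ε : ℝ := (1 - (ξ / x).re) / 2 with hεdef
  have hε0 : 0 < ε := by rw [hεdef]; linarith
  set δ : ℝ := min (1/2) ε with hδdef
  have hδ0 : 0 < δ := lt_min (by norm_num) hε0
  have hball : ∀ u ∈ Metric.ball (1:ℝ) δ, ε ≤ u - (ξ / x).re ∧ (1:ℝ)/2 ≤ u := by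
    intro u hu
    rw [Metric.mem_ball, Real.dist_eq] at hu
    obtain ⟨h1, h2⟩ := abs_lt.1 hu
    have h3 : δ ≤ ε := min_le_right _ _
    have h4 : δ ≤ 1/2 := min_le_left _ _
    constructor
    · rw [hεdef] at h3 ⊢; linarith
    · linarith
  -- the family F and its u-derivative F'
  set F : ℝ → ℝ → ℂ := fun u t => (t : ℂ) ^ n *
      Li m (Complex.exp ((-(2 * (π : ℂ)) * ((u : ℂ) - ξ / x)) * (t : ℂ) + K)) * cth t with hFdef
  set F' : ℝ → ℝ → ℂ := fun u t => -(2 * (π : ℂ)) * ((t : ℂ) ^ (n + 1) *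
      Li (m - 1 : ℕ) (Complex.exp ((-(2 * (π : ℂ)) * ((u : ℂ) - ξ / x)) * (t : ℂ) + K)) * cth t)
    with hF'def
  -- norm bound for the exponentials
  have hwle : ∀ u ∈ Metric.ball (1:ℝ) δ, ∀ t : ℝ, 0 < t →
      ‖Complex.exp ((-(2 * (π : ℂ)) * ((u : ℂ) - ξ / x)) * (t : ℂ) + K)‖ ≤
        Real.exp (-(2*π*ε) * t) * rK := by
    intro u hu t ht
    rw [hwnorm, hA_re]
    have h1 : ε ≤ u - (ξ / x).re := (hball u hu).1
    have h2 : -(2*π) * (u - (ξ/x).re) * t ≤ -(2*π*ε) * t := by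
      nlinarith [mul_nonneg (mul_nonneg (by positivity : (0:ℝ) ≤ 2*π) ht.le) (sub_nonneg.2 h1)]
    rw [← Real.exp_add]
    exact Real.exp_le_exp.2 (by linarith)
  have hexpt1 : ∀ t : ℝ, 0 ≤ t → Real.exp (-(2*π*ε) * t) ≤ 1 := by
    intro t ht
    rw [Real.exp_le_one_iff]
    nlinarith [mul_nonneg (le_of_lt (by positivity : (0:ℝ) < 2*π*ε)) ht]
  have hwlt1 : ∀ u ∈ Metric.ball (1:ℝ) δ, ∀ t : ℝ, 0 < t →
      ‖Complex.exp ((-(2 * (π : ℂ)) * ((u : ℂ) - ξ / x)) * (t : ℂ) + K)‖ < 1 := by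
    intro u hu t ht
    refine lt_of_le_of_lt ((hwle u hu t ht).trans ?_) hrK1
    nlinarith [hexpt1 t ht.le]
  -- integrability of polynomial-exponential bounds
  have hintpoly : ∀ k : ℕ, IntegrableOn (fun t : ℝ => t ^ k * Real.exp (-(2*π*ε) * t))
      (Set.Ioi 0) := by
    intro k
    have h := integrableOn_rpow_mul_exp_neg_mul_rpow (s := (k : ℝ)) (p := 1) (b := 2*π*ε)
      (lt_of_lt_of_le neg_one_lt_zero (Nat.cast_nonneg k)) one_pos (by positivity)
    simpa [Real.rpow_natCast, Real.rpow_one] using h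
  -- measurability
  have hcthm : Measurable cth := by
    have hzc : Continuous fun t : ℝ => (π : ℂ) * ((t : ℂ) - Complex.I * y) / x := by fun_prop
    exact ((Complex.continuous_cosh.comp hzc).measurable).div
      ((Complex.continuous_sinh.comp hzc).measurable)
  have hmeasAux : ∀ (p k : ℕ) (A : ℂ), A.re < 0 →
      AEStronglyMeasurable (fun t : ℝ => (t : ℂ) ^ k * Li p (Complex.exp (A * (t : ℂ) + K)) * cth t)
        (volume.restrict (Set.Ioi 0)) := by
    intro p k A hA
    apply aestronglyMeasurable_of_tendsto_ae (u := atTop)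
      (f := fun (N : ℕ) (t : ℝ) => (t : ℂ) ^ k *
        (∑ j ∈ Finset.range N,
          Complex.exp (A * (t : ℂ) + K) ^ (j + 1) / ((j : ℂ) + 1) ^ (p : ℤ)) * cth t)
    · intro N
      have hc : Continuous fun t : ℝ => (t : ℂ) ^ k *
          (∑ j ∈ Finset.range N,
            Complex.exp (A * (t : ℂ) + K) ^ (j + 1) / ((j : ℂ) + 1) ^ (p : ℤ)) := by fun_prop
      exact (hc.measurable.mul hcthm).aestronglyMeasurable
    · rw [ae_restrict_iff' measurableSet_Ioi]
      refine ae_of_all _ fun t ht => ?_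
      have hw : ‖Complex.exp (A * (t : ℂ) + K)‖ < 1 := by
        rw [hwnorm]
        refine lt_of_le_of_lt (Real.exp_le_exp.2 ?_) hrK1
        nlinarith [mul_pos (neg_pos.2 hA) (Set.mem_Ioi.1 ht)]
      have hs : Summable fun j : ℕ =>
          Complex.exp (A * (t : ℂ) + K) ^ (j + 1) / ((j : ℂ) + 1) ^ (p : ℤ) :=
        (summable_norm_li p hw).of_norm
      have hts := hs.hasSum.tendsto_sum_nat
      exact (hts.const_mul ((t : ℂ) ^ k)).mul_const (cth t)
  -- negativity of A_u.re on the ball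
  have hAneg : ∀ u ∈ Metric.ball (1:ℝ) δ, (-(2 * (π : ℂ)) * ((u : ℂ) - ξ / x)).re < 0 := by
    intro u hu
    rw [hA_re]
    nlinarith [lt_of_lt_of_le hε0 (hball u hu).1]
  have h1ball : (1:ℝ) ∈ Metric.ball (1:ℝ) δ := Metric.mem_ball_self hδ0
  have hF_meas : ∀ᶠ u in nhds (1:ℝ), AEStronglyMeasurable (F u) (volume.restrict (Set.Ioi 0)) := by
    filter_upwards [Metric.ball_mem_nhds (1:ℝ) hδ0] with u hu
    exact hmeasAux m n _ (hAneg u hu)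
  -- Li bound helper
  have li_div_bound : ∀ (p : ℕ) {w : ℂ} {B : ℝ}, ‖w‖ ≤ B * rK → B ≤ 1 → 0 ≤ B →
      ‖Li p w‖ ≤ rK / (1 - rK) * B := by
    intro p w B hwB hB1 hB0
    have h2 : ‖w‖ ≤ rK := hwB.trans (by nlinarith)
    have hw1 : ‖w‖ < 1 := lt_of_le_of_lt h2 hrK1
    refine (norm_Li_le p hw1).trans ?_
    calc ‖w‖ / (1 - ‖w‖) ≤ B * rK / (1 - rK) :=
          div_le_div₀ (by positivity) hwB (by linarith) (by linarith)
      _ = rK / (1 - rK) * B := by ring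
  have hnormpow : ∀ (k : ℕ) (t : ℝ), 0 < t → ‖(t:ℂ)^k‖ = t^k := by
    intro k t ht
    rw [norm_pow, Complex.norm_real, Real.norm_eq_abs, abs_of_pos ht]
  -- bound on F
  have hFle : ∀ u ∈ Metric.ball (1:ℝ) δ, ∀ t : ℝ, 0 < t →
      ‖F u t‖ ≤ C * (rK / (1 - rK)) * (t ^ n * Real.exp (-(2*π*ε) * t)) := by
    intro u hu t ht
    have hLi := li_div_bound m (hwle u hu t ht) (hexpt1 t ht.le) (Real.exp_pos _).le
    calc ‖F u t‖ = ‖(t:ℂ)^n‖ *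
          ‖Li m (Complex.exp ((-(2 * (π : ℂ)) * ((u : ℂ) - ξ / x)) * (t : ℂ) + K))‖ * ‖cth t‖ := by
          simp only [hFdef, norm_mul]
      _ ≤ t^n * (rK / (1 - rK) * Real.exp (-(2*π*ε) * t)) * C := by
          rw [hnormpow n t ht]
          have hBn : 0 ≤ rK / (1 - rK) * Real.exp (-(2*π*ε) * t) :=
            mul_nonneg (div_nonneg hrK0.le (by linarith)) (Real.exp_pos _).le
          exact mul_le_mul (mul_le_mul_of_nonneg_left hLi (pow_nonneg ht.le n))
            (hCb' t ht.le) (norm_nonneg _) (mul_nonneg (pow_nonneg ht.le n) hBn)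
      _ = C * (rK / (1 - rK)) * (t ^ n * Real.exp (-(2*π*ε) * t)) := by ring
  have hF_int : Integrable (F 1) (volume.restrict (Set.Ioi 0)) := by
    refine Integrable.mono' ((hintpoly n).const_mul (C * (rK / (1 - rK))))
      (hmeasAux m n _ (hAneg 1 h1ball)) ?_
    rw [ae_restrict_iff' measurableSet_Ioi]
    exact ae_of_all _ fun t ht => hFle 1 h1ball t ht
  -- the bound for F'
  set bnd : ℝ → ℝ := fun t => (2*π*(C * (rK / (1 - rK)))) * (t^(n+1) * Real.exp (-(2*π*ε) * t))
    with hbnddef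
  have hbnd_int : Integrable bnd (volume.restrict (Set.Ioi 0)) :=
    (hintpoly (n+1)).const_mul _
  have hnormc : ‖-(2*(π:ℂ))‖ = 2*π := by
    rw [norm_neg, show (2*(π:ℂ)) = ((2*π:ℝ):ℂ) by push_cast; ring, Complex.norm_real,
      Real.norm_eq_abs, abs_of_pos (by positivity)]
  have h_bound : ∀ᵐ t ∂(volume.restrict (Set.Ioi 0)), ∀ u ∈ Metric.ball (1:ℝ) δ,
      ‖F' u t‖ ≤ bnd t := by
    rw [ae_restrict_iff' measurableSet_Ioi]
    refine ae_of_all _ fun t ht u hu => ?_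
    have ht0 : (0:ℝ) < t := ht
    have hLi := li_div_bound (m-1) (hwle u hu t ht0) (hexpt1 t ht0.le) (Real.exp_pos _).le
    calc ‖F' u t‖ = ‖-(2*(π:ℂ))‖ * (‖(t:ℂ)^(n+1)‖ *
          ‖Li (m-1 : ℕ) (Complex.exp ((-(2 * (π : ℂ)) * ((u : ℂ) - ξ / x)) * (t : ℂ) + K))‖ *
          ‖cth t‖) := by
          simp only [hF'def, norm_mul]
      _ ≤ (2*π) * (t^(n+1) * (rK / (1 - rK) * Real.exp (-(2*π*ε) * t)) * C) := by
          rw [hnormc, hnormpow (n+1) t ht0]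
          have hBn : 0 ≤ rK / (1 - rK) * Real.exp (-(2*π*ε) * t) :=
            mul_nonneg (div_nonneg hrK0.le (by linarith)) (Real.exp_pos _).le
          refine mul_le_mul_of_nonneg_left ?_ (by positivity)
          exact mul_le_mul (mul_le_mul_of_nonneg_left hLi (pow_nonneg ht0.le (n+1)))
            (hCb' t ht0.le) (norm_nonneg _) (mul_nonneg (pow_nonneg ht0.le (n+1)) hBn)
      _ = bnd t := by rw [hbnddef]; ring
  -- differentiability in u
  have h_diff : ∀ᵐ t ∂(volume.restrict (Set.Ioi 0)), ∀ u ∈ Metric.ball (1:ℝ) δ,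
      HasDerivAt (fun v : ℝ => F v t) (F' u t) u := by
    rw [ae_restrict_iff' measurableSet_Ioi]
    refine ae_of_all _ fun t ht u hu => ?_
    have ht0 : (0:ℝ) < t := ht
    have harg : ∀ v : ℝ, ((-(2*π*t) : ℝ) : ℂ) * (v:ℂ) + (2*(π:ℂ)*ξ*(t:ℂ)/x + K) =
        (-(2 * (π : ℂ)) * ((v : ℂ) - ξ / x)) * (t : ℂ) + K := by
      intro v; push_cast; ring
    have hbre : (2*(π:ℂ)*ξ*(t:ℂ)/x + K).re = (2*π*t) * (ξ/x).re + K.re := by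
      rw [show 2*(π:ℂ)*ξ*(t:ℂ)/x + K = ((2*π*t : ℝ):ℂ) * (ξ/x) + K by push_cast; ring,
        Complex.add_re, Complex.re_ofReal_mul]
    have hab : (-(2*π*t)) * u + (2*(π:ℂ)*ξ*(t:ℂ)/x + K).re < 0 := by
      rw [hbre]
      nlinarith [mul_pos (mul_pos (by positivity : (0:ℝ) < 2*π) ht0)
        (lt_of_lt_of_le hε0 (hball u hu).1), hKre]
    have hLd := hasDerivAt_Li_exp m hm (-(2*π*t)) (2*(π:ℂ)*ξ*(t:ℂ)/x + K) u hab
    simp only [harg] at hLd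
    have hd2 := (hLd.const_mul ((t:ℂ)^n)).mul_const (cth t)
    refine hd2.congr_deriv ?_
    symm
    simp only [hF'def]
    push_cast
    ring
  -- differentiate under the integral sign
  have hF'_meas : AEStronglyMeasurable (F' 1) (volume.restrict (Set.Ioi 0)) := by
    simp only [hF'def]
    exact (hmeasAux (m-1) (n+1) _ (hAneg 1 h1ball)).const_mul (-(2*(π:ℂ)))
  obtain ⟨hF'int, hKey⟩ := hasDerivAt_integral_of_dominated_loc_of_deriv_le (F' := F') (Metric.ball_mem_nhds (1:ℝ) hδ0)
    hF_meas hF_int hF'_meas h_bound hbnd_int h_diff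
  set G : ℝ → ℂ := fun u => ∫ t in Set.Ioi (0:ℝ), F u t with hGdef
  have hpowD : HasDerivAt (fun u : ℝ => ((u:ℂ))^(n+1)) (((n:ℂ)+1)) 1 := by
    have h := (hasDerivAt_pow (n+1) (((1:ℝ)):ℂ)).comp_ofReal
    simpa using h
  have hmain := (hpowD.mul hKey).const_mul ((-1:ℂ)^(n+m+1))
  -- identification of the integrands with Jfun
  have hJf : ∀ (p k : ℕ) (t : ℝ), Jfun p k x y ξ η t =
      (t:ℂ)^k * Li p (Complex.exp (-(2*(π:ℂ))*(1 - ξ/x)*(t:ℂ) + K)) * cth t := by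
    intro p k t
    rw [Jfun, div_eq_mul_inv, Complex.tanh_eq_sinh_div_cosh, inv_div]
  have hargone : ∀ t : ℝ, (-(2 * (π : ℂ)) * (((1:ℝ):ℂ) - ξ / x)) * (t : ℂ) + K =
      -(2*(π:ℂ))*(1 - ξ/x)*(t:ℂ) + K := by
    intro t; push_cast; ring
  have hG1 : G 1 = ∫ t in Set.Ioi (0:ℝ), Jfun m n x y ξ η t := by
    rw [hGdef]
    refine integral_congr_ae (Eventually.of_forall fun t => ?_)
    rw [hJf m n t]
    simp only [hFdef]
    rw [hargone]
  have hJeq : J m n x y ξ η = (-1:ℂ)^(n+m+1) * G 1 := by rw [J, hG1]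
  have hIF' : ∫ t in Set.Ioi (0:ℝ), F' 1 t =
      -(2*(π:ℂ)) * ∫ t in Set.Ioi (0:ℝ), Jfun (m-1) (n+1) x y ξ η t := by
    have hpt' : ∀ t : ℝ, F' 1 t = -(2*(π:ℂ)) * Jfun (m-1) (n+1) x y ξ η t := by
      intro t
      rw [hJf (m-1) (n+1) t]
      simp only [hF'def]
      rw [hargone]
    calc ∫ t in Set.Ioi (0:ℝ), F' 1 t
        = ∫ t in Set.Ioi (0:ℝ), -(2*(π:ℂ)) * Jfun (m-1) (n+1) x y ξ η t :=
          integral_congr_ae (Eventually.of_forall hpt')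
      _ = -(2*(π:ℂ)) * ∫ t in Set.Ioi (0:ℝ), Jfun (m-1) (n+1) x y ξ η t :=
          integral_const_mul _ _
  have hJeq' : J (m-1) (n+1) x y ξ η =
      (-1:ℂ)^(n+m+1) * ∫ t in Set.Ioi (0:ℝ), Jfun (m-1) (n+1) x y ξ η t := by
    rw [J]
    congr 2
    omega
  -- eventual equality with the rescaled integral
  have hEq : (fun u : ℝ => J m n ((u:ℂ)*x) ((u:ℂ)*y) ξ η) =ᶠ[nhds (1:ℝ)]
      fun u => (-1:ℂ)^(n+m+1) * ((u:ℂ)^(n+1) * G u) := by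
    filter_upwards [Metric.ball_mem_nhds (1:ℝ) hδ0] with u hu
    have hu0 : (0:ℝ) < u := lt_of_lt_of_le one_half_pos (hball u hu).2
    have huc : (u:ℂ) ≠ 0 := Complex.ofReal_ne_zero.2 (ne_of_gt hu0)
    have hpt : ∀ τ : ℝ, Jfun m n ((u:ℂ)*x) ((u:ℂ)*y) ξ η (u*τ) = (u:ℂ)^n * F u τ := by
      intro τ
      rw [Jfun, div_eq_mul_inv, Complex.tanh_eq_sinh_div_cosh, inv_div]
      simp only [hFdef]
      have harg : -(2*(π:ℂ))*(1 - ξ/((u:ℂ)*x))*(((u*τ : ℝ)):ℂ) +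
          2*(π:ℂ)*Complex.I*(η - ξ*((u:ℂ)*y)/((u:ℂ)*x)) =
          (-(2*(π:ℂ))*((u:ℂ) - ξ/x))*(τ:ℂ) + K := by
        rw [hKdef]; push_cast; field_simp
      have hw : (π:ℂ)*((((u*τ:ℝ)):ℂ) - Complex.I*((u:ℂ)*y))/((u:ℂ)*x) =
          (π:ℂ)*((τ:ℂ) - Complex.I*y)/x := by
        push_cast; rw [div_eq_div_iff (mul_ne_zero huc hx) hx]; ring
      rw [harg, hw]
      have hsplit : ((u*τ : ℝ):ℂ)^n = (u:ℂ)^n * (τ:ℂ)^n := by push_cast; ring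
      rw [hsplit]; ring
    have hcv : ∫ s in Set.Ioi (0:ℝ), Jfun m n ((u:ℂ)*x) ((u:ℂ)*y) ξ η s
        = u • ∫ τ in Set.Ioi (0:ℝ), Jfun m n ((u:ℂ)*x) ((u:ℂ)*y) ξ η (u*τ) := by
      have h1 := integral_comp_mul_left_Ioi (fun s => Jfun m n ((u:ℂ)*x) ((u:ℂ)*y) ξ η s) 0 hu0
      rw [mul_zero] at h1
      rw [h1, smul_inv_smul₀ (ne_of_gt hu0)]
    have h2 : ∫ τ in Set.Ioi (0:ℝ), Jfun m n ((u:ℂ)*x) ((u:ℂ)*y) ξ η (u*τ)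
        = (u:ℂ)^n * G u := by
      rw [hGdef, ← integral_const_mul]
      exact integral_congr_ae (Eventually.of_forall fun τ => hpt τ)
    rw [J, hcv, h2, Complex.real_smul]
    ring
  have hfinal : HasDerivAt (fun u : ℝ => (-1:ℂ)^(n+m+1) * ((u:ℂ)^(n+1) * G u))
      (((n : ℂ) + 1) * J m n x y ξ η - 2 * (π : ℂ) * J (m - 1) (n + 1) x y ξ η) 1 := by
    refine hmain.congr_deriv ?_
    symm
    rw [hJeq, hJeq', hIF']
    push_cast
    ring
  exact hfinal.congr_of_eventuallyEq hEq
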